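/- For every integer k ≥ 3, there exist infinitely many k-dicritical digraphs containing no directed path on 3k+1 vertices. -/

import Mathlib

/-- A directed cycle of `A` within the set `s`, given by its first vertex `v`
and the list `l` of remaining vertices. Its length (number of vertices/arcs)
is `(v :: l).length`. -/
def IsCycleOn {V : Type} (A : V → V → Prop) (s : Set V) (v : V) (l : List V) : Prop :=
  (∀ x ∈ v :: l, x ∈ s) ∧ (v :: l).Nodup ∧ List.Chain A v (l ++ [v])

/-- `D[s]` admits a `k`-dicolouring: a colouring with no monochromatic directed cycle. -/
def DicolorableOn {V : Type} (A : V → V → Prop) (s : Set V) (k : ℕ) : Prop :=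
  ∃ φ : V → Fin k, ∀ v l, IsCycleOn A s v l → ¬ (∀ x ∈ v :: l, φ x = φ v)

/-- `D[s]` is `k`-dicritical: its dichromatic number is `k` (not `(k-1)`-dicolourable but
`k`-dicolourable) and removing any vertex or any arc makes it `(k-1)`-dicolourable. -/
def Dicritical {V : Type} (A : V → V → Prop) (s : Set V) (k : ℕ) : Prop :=
  ¬ DicolorableOn A s (k - 1) ∧ DicolorableOn A s k ∧
  (∀ v ∈ s, DicolorableOn A (s \ {v}) (k - 1)) ∧
  (∀ a b, a ∈ s → b ∈ s → A a b →
    DicolorableOn (fun x y => A x y ∧ ¬(x = a ∧ y = b)) s (k - 1))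


namespace C

variable {V : Type}

lemma chain_gt (f : V → ℕ) :
    ∀ (l : List V) (v w : V), List.Chain (fun a b => f b < f a) v (l ++ [w]) → f w < f v := by
  intro l
  induction l with
  | nil => intro v w h; simpa [List.Chain] using h
  | cons a t ih =>
    intro v w h
    unfold List.Chain at h
    rw [List.cons_append, List.chain_cons] at h
    exact lt_trans (ih a w h.2) h.1

lemma chain_strengthen {R : V → V → Prop} {P : V → Prop} :
    ∀ (L : List V) (v : V), List.Chain R v L → (∀ x ∈ v :: L, P x) →
      List.Chain (fun a b => R a b ∧ P a ∧ P b) v L := by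
  intro L
  induction L with
  | nil => intro v _ _; exact List.Chain.nil
  | cons a t ih =>
    intro v h hP
    unfold List.Chain at h ⊢
    rw [List.chain_cons] at h ⊢
    refine ⟨⟨h.1, hP v (by simp), hP a (by simp)⟩, ih a h.2 ?_⟩
    intro x hx
    apply hP
    simp only [List.mem_cons] at hx ⊢
    tauto

/-- Main tool: a `K`-coloring with a per-class rank function certifies dicolorability. -/
lemma dicolorable_of_rank {A : V → V → Prop} {s : Set V} {K : ℕ} (hK : 0 < K)
    (φ f : V → ℕ) (hb : ∀ x ∈ s, φ x < K)
    (h : ∀ x y, x ∈ s → y ∈ s → A x y → φ x = φ y → f y < f x) :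
    DicolorableOn A s K := by
  refine ⟨fun x => ⟨φ x % K, Nat.mod_lt _ hK⟩, ?_⟩
  rintro v l ⟨hmem, hnd, hch⟩ hmono
  have hvmem : v ∈ s := hmem v (by simp)
  have hP : ∀ x ∈ v :: l, x ∈ s ∧ φ x = φ v := by
    intro x hx
    have hxs : x ∈ s := hmem x hx
    have := hmono x hx
    have h1 : φ x % K = φ v % K := by simpa [Fin.ext_iff] using this
    rw [Nat.mod_eq_of_lt (hb x hxs), Nat.mod_eq_of_lt (hb v hvmem)] at h1
    exact ⟨hxs, h1⟩
  have hch2 : List.Chain (fun a b => A a b ∧ (a ∈ s ∧ φ a = φ v) ∧ (b ∈ s ∧ φ b = φ v)) v (l ++ [v]) := by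
    apply chain_strengthen _ _ hch
    intro x hx
    apply hP
    rcases List.mem_cons.mp hx with h1 | h2
    · simp [h1]
    · rcases List.mem_append.mp h2 with h3 | h4
      · simp [h3]
      · simp at h4; simp [h4]
  have hch3 : List.Chain (fun a b => f b < f a) v (l ++ [v]) := by
    apply List.Chain.imp ?_ hch2
    rintro a b ⟨hab, ⟨ha, hpa⟩, ⟨hbs, hpb⟩⟩
    exact h a b ha hbs hab (hpa.trans hpb.symm)
  exact lt_irrefl _ (chain_gt f l v v hch3)

lemma not_mono_digon {A : V → V → Prop} {s : Set V} {K : ℕ} {φ : V → Fin K}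
    (hφ : ∀ v l, IsCycleOn A s v l → ¬ (∀ x ∈ v :: l, φ x = φ v))
    {x y : V} (hx : x ∈ s) (hy : y ∈ s) (hxy : x ≠ y) (h1 : A x y) (h2 : A y x) :
    φ x ≠ φ y := by
  intro heq
  apply hφ x [y]
  · refine ⟨?_, ?_, ?_⟩
    · intro z hz; rcases List.mem_cons.mp hz with h | h
      · simpa [h]
      · simp at h; simpa [h]
    · simp [hxy]
    · simp [List.Chain, List.chain_cons, h1, h2]
  · intro z hz
    rcases List.mem_cons.mp hz with h | h
    · simp [h]
    · simp at h; simp [h, heq.symm]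

lemma not_mono_tri {A : V → V → Prop} {s : Set V} {K : ℕ} {φ : V → Fin K}
    (hφ : ∀ v l, IsCycleOn A s v l → ¬ (∀ x ∈ v :: l, φ x = φ v))
    {x y z : V} (hx : x ∈ s) (hy : y ∈ s) (hz : z ∈ s)
    (hxy : x ≠ y) (hyz : y ≠ z) (hxz : x ≠ z)
    (h1 : A x y) (h2 : A y z) (h3 : A z x)
    (e1 : φ y = φ x) (e2 : φ z = φ x) : False := by
  apply hφ x [y, z]
  · refine ⟨?_, ?_, ?_⟩
    · intro u hu
      simp only [List.mem_cons, List.not_mem_nil, or_false] at hu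
      rcases hu with h | h | h <;> simp [h, hx, hy, hz]
    · simp [hxy, hyz, hxz]
    · simp [List.Chain, List.chain_cons, h1, h2, h3]
  · intro u hu
    simp only [List.mem_cons, List.not_mem_nil, or_false] at hu
    rcases hu with h | h | h <;> simp [h, e1, e2]

end C

namespace C

abbrev W (k n : ℕ) := Fin (k-1) ⊕ Fin n

/-- hubs: `inl i`; `i = 0,1` are the special hubs `p,q`; `i ≥ 2` are universal.
cycle vertices: `inr v`, even = sources, odd = sinks, plus digon `(0, n-1)`. -/
def Arc (k n : ℕ) : W k n → W k n → Prop := fun x y =>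
  match x, y with
  | .inl i, .inl j => i.val ≠ j.val
  | .inl i, .inr v => 2 ≤ i.val ∨ v.val % 2 = 0
  | .inr v, .inl i => 2 ≤ i.val ∨ v.val % 2 = 1
  | .inr v, .inr w => (v.val % 2 = 0 ∧ (w.val = v.val + 1 ∨ v.val = w.val + 1))
      ∨ (v.val = 0 ∧ w.val = n - 1) ∨ (v.val = n - 1 ∧ w.val = 0)

@[simp] lemma arc_ll {k n i j} : Arc k n (.inl i) (.inl j) ↔ i.val ≠ j.val := Iff.rfl
@[simp] lemma arc_lr {k n i v} : Arc k n (.inl i) (.inr v) ↔ (2 ≤ i.val ∨ v.val % 2 = 0) := Iff.rfl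
@[simp] lemma arc_rl {k n v i} : Arc k n (.inr v) (.inl i) ↔ (2 ≤ i.val ∨ v.val % 2 = 1) := Iff.rfl
@[simp] lemma arc_rr {k n v w} : Arc k n (.inr v) (.inr w) ↔
    ((v.val % 2 = 0 ∧ (w.val = v.val + 1 ∨ v.val = w.val + 1))
      ∨ (v.val = 0 ∧ w.val = n - 1) ∨ (v.val = n - 1 ∧ w.val = 0)) := Iff.rfl

variable {k n : ℕ}

lemma arc_irrefl (hn : 3 ≤ n) : ∀ x : W k n, ¬ Arc k n x x := by
  rintro (i | v) h
  · simp at h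
  · simp only [arc_rr] at h
    omega

end C

namespace C

variable {k n : ℕ}

theorem thm1 (hk : 3 ≤ k) (hodd : n % 2 = 1) (hn : 3 ≤ n) :
    ¬ DicolorableOn (Arc k n) Set.univ (k - 1) := by
  rintro ⟨φ, hφ⟩
  have hmem : ∀ x : W k n, x ∈ (Set.univ : Set (W k n)) := fun x => trivial
  -- hub colors are pairwise distinct
  have hubinj : Function.Injective (fun i : Fin (k-1) => φ (.inl i)) := by
    intro i j hij
    by_contra hne
    have hv : i.val ≠ j.val := fun h => hne (Fin.ext h)
    exact not_mono_digon hφ (hmem _) (hmem _)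
      (by simp only [ne_eq, Sum.inl.injEq]; exact fun h => hv (congrArg Fin.val h))
      (by simp [hv]) (by simp only [arc_ll]; omega) hij
  have hubsurj : Function.Surjective (fun i : Fin (k-1) => φ (.inl i)) :=
    Finite.injective_iff_surjective.mp hubinj
  -- every cycle vertex is colored with hub 0 or hub 1's color
  have hpair : ∀ v : Fin n, φ (.inr v) = φ (.inl (⟨0, by omega⟩ : Fin (k-1)))
      ∨ φ (.inr v) = φ (.inl (⟨1, by omega⟩ : Fin (k-1))) := by
    intro v
    obtain ⟨i, hi⟩ := hubsurj (φ (.inr v))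
    by_cases h2 : 2 ≤ i.val
    · exfalso
      exact not_mono_digon hφ (hmem _) (hmem _) (by simp)
        (by simp [h2]) (by simp [h2]) hi.symm
    · have : i.val = 0 ∨ i.val = 1 := by omega
      rcases this with h | h
      · left; rw [← hi, show i = (⟨0, by omega⟩ : Fin (k-1)) from Fin.ext (by simpa using h)]
      · right; rw [← hi, show i = (⟨1, by omega⟩ : Fin (k-1)) from Fin.ext (by simpa using h)]
  -- adjacent cycle vertices get distinct colors
  have hadj : ∀ v w : Fin n, Arc k n (.inr v) (.inr w) → φ (.inr v) ≠ φ (.inr w) := by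
    intro v w harc heq
    rcases (arc_rr.mp harc) with ⟨hv, hw⟩ | ⟨hv, hw⟩ | ⟨hv, hw⟩
    · -- adjacent: v even, w odd; mono triangle with suitable hub
      have hvw : v ≠ w := by intro h; subst h; omega
      rcases hpair v with hc | hc
      all_goals
        refine not_mono_tri hφ (hmem _) (hmem _) (hmem _) (y := Sum.inr w)
          (by simpa using hvw) (by simp) (by simp) harc
          (by simp; omega) (by simp; omega) heq.symm hc.symm
    all_goals
      exact not_mono_digon hφ (hmem _) (hmem _)
        (by simp only [ne_eq, Sum.inr.injEq]; intro h; rw [h] at hv; omega)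
        harc (by simp; omega) heq
  have h0n : (0 : ℕ) < n := by omega
  have hab : φ (.inl (⟨0, by omega⟩ : Fin (k-1))) ≠ φ (.inl (⟨1, by omega⟩ : Fin (k-1))) := by
    intro h
    have := hubinj h
    simp [Fin.ext_iff] at this
  -- parity propagation
  have key : ∀ i, ∀ h : i < n, (φ (.inr ⟨i, h⟩) = φ (.inr ⟨0, h0n⟩) ↔ i % 2 = 0) := by
    intro i
    induction i with
    | zero => intro h; simp
    | succ m ih =>
      intro h
      have hm : m < n := by omega
      have hne : φ (.inr ⟨m, hm⟩) ≠ φ (.inr ⟨m+1, h⟩) := by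
        by_cases hpar : m % 2 = 0
        · exact hadj _ _ (by simp; omega)
        · intro he
          exact hadj ⟨m+1, h⟩ ⟨m, hm⟩ (by simp; omega) he.symm
      by_cases hpar : m % 2 = 0
      · have h1 : φ (.inr ⟨m, hm⟩) = φ (.inr ⟨0, h0n⟩) := (ih hm).mpr hpar
        constructor
        · intro he; exact absurd (h1.trans he.symm) hne
        · intro hp2; omega
      · have h1 : φ (.inr ⟨m, hm⟩) ≠ φ (.inr ⟨0, h0n⟩) := fun he => hpar ((ih hm).mp he)
        constructor
        · intro _; omega
        · intro _
          rcases hpair ⟨m, hm⟩ with hA | hA <;> rcases hpair ⟨m+1, h⟩ with hB | hB <;>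
            rcases hpair ⟨0, h0n⟩ with hC | hC <;>
            first
              | (exact hB.trans hC.symm)
              | (exact absurd (hA.trans hC.symm) h1)
              | (exact absurd (hA.trans hB.symm) hne)
  -- conclude via the digon (0, n-1)
  have hn1 : n - 1 < n := by omega
  have hfin : φ (.inr ⟨n-1, hn1⟩) = φ (.inr ⟨0, h0n⟩) := (key (n-1) hn1).mpr (by omega)
  exact hadj ⟨n-1, hn1⟩ ⟨0, h0n⟩ (by simp) hfin

end C

namespace C

variable {k n : ℕ}

theorem thm2 (hk : 3 ≤ k) (hodd : n % 2 = 1) (hn : 3 ≤ n) :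
    DicolorableOn (Arc k n) Set.univ k := by
  apply dicolorable_of_rank (by omega)
    (Sum.elim (fun i => i.val) (fun v => if v.val = n - 1 then k - 1 else v.val % 2))
    (Sum.elim (fun _ => 1) (fun v => if v.val % 2 = 1 then 2 else 0))
  · rintro (i | v) -
    · have := i.isLt; simp; omega
    · simp; split_ifs <;> omega
  · rintro (i | v) (j | w) - - hA heq <;>
      simp only [Sum.elim_inl, Sum.elim_inr, arc_ll, arc_lr, arc_rl, arc_rr] at hA heq ⊢
    · omega
    · have := i.isLt; have := w.isLt; split_ifs at heq ⊢ <;> omega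
    · have := j.isLt; have := v.isLt; split_ifs at heq ⊢ <;> omega
    · have := v.isLt; have := w.isLt; split_ifs at heq ⊢ <;> omega

end C

namespace C

variable {k n : ℕ}

theorem thm3 (hk : 3 ≤ k) (hodd : n % 2 = 1) (hn : 3 ≤ n) :
    ∀ v0 : W k n, DicolorableOn (Arc k n) (Set.univ \ {v0}) (k - 1) := by
  rintro (c | j)
  · by_cases hc : 2 ≤ c.val
    · -- delete a universal hub
      apply dicolorable_of_rank (show 0 < k-1 by omega)
        (Sum.elim (fun i => i.val) (fun v => if v.val = n - 1 then c.val else v.val % 2))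
        (Sum.elim (fun _ => 1) (fun v => if v.val % 2 = 1 then 2 else 0))
      · rintro (i | v) -
        · have := i.isLt; simp <;> omega
        · have := c.isLt; simp; split_ifs <;> omega
      · rintro (i | v) (j | w) hx hy hA heq <;>
          simp only [Sum.elim_inl, Sum.elim_inr, arc_ll, arc_lr, arc_rl, arc_rr] at hA heq ⊢
        · omega
        · have h1 : ¬ i.val = c.val := by
            have := hx.2; simp only [Set.mem_singleton_iff, Sum.inl.injEq] at this
            exact fun h => this (Fin.ext h)
          have := i.isLt; have := w.isLt; split_ifs at heq ⊢ <;> try omega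
        · have h1 : ¬ j.val = c.val := by
            have := hy.2; simp only [Set.mem_singleton_iff, Sum.inl.injEq] at this
            exact fun h => this (Fin.ext h)
          have := j.isLt; have := v.isLt; split_ifs at heq ⊢ <;> try omega
        · have := v.isLt; have := w.isLt; have := c.isLt; split_ifs at heq ⊢ <;> try omega
    · -- delete hub p (c = 0) or q (c = 1)
      apply dicolorable_of_rank (show 0 < k-1 by omega)
        (Sum.elim (fun i => if i.val = 1 then 0 else i.val) (fun v => if v.val = 0 then 0 else 1))
        (Sum.elim (fun _ => 2) (fun v => if v.val = 0 then 0 else if v.val % 2 = 0 then 1 else 0))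
      · rintro (i | v) -
        · have := i.isLt; simp; split_ifs <;> omega
        · simp; split_ifs <;> omega
      · rintro (i | v) (j | w) hx hy hA heq <;>
          simp only [Sum.elim_inl, Sum.elim_inr, arc_ll, arc_lr, arc_rl, arc_rr] at hA heq ⊢
        · have h1 : ¬ i.val = c.val := by
            have := hx.2; simp only [Set.mem_singleton_iff, Sum.inl.injEq] at this
            exact fun h => this (Fin.ext h)
          have h2 : ¬ j.val = c.val := by
            have := hy.2; simp only [Set.mem_singleton_iff, Sum.inl.injEq] at this
            exact fun h => this (Fin.ext h)
          split_ifs at heq ⊢ <;> try omega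
        · have h1 : ¬ i.val = c.val := by
            have := hx.2; simp only [Set.mem_singleton_iff, Sum.inl.injEq] at this
            exact fun h => this (Fin.ext h)
          have := i.isLt; have := w.isLt; split_ifs at heq ⊢ <;> try omega
        · have h1 : ¬ j.val = c.val := by
            have := hy.2; simp only [Set.mem_singleton_iff, Sum.inl.injEq] at this
            exact fun h => this (Fin.ext h)
          have := j.isLt; have := v.isLt; split_ifs at heq ⊢ <;> try omega
        · have := v.isLt; have := w.isLt; split_ifs at heq ⊢ <;> try omega
  · -- delete a cycle vertex j
    apply dicolorable_of_rank (show 0 < k-1 by omega)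
      (Sum.elim (fun i => i.val)
        (fun v => if v.val < j.val then v.val % 2 else (v.val + 1) % 2))
      (Sum.elim (fun _ => 1) (fun v => if v.val % 2 = 1 then 2 else 0))
    · rintro (i | v) -
      · have := i.isLt; simp <;> omega
      · simp; split_ifs <;> omega
    · rintro (i | v) (j' | w) hx hy hA heq <;>
        simp only [Sum.elim_inl, Sum.elim_inr, arc_ll, arc_lr, arc_rl, arc_rr] at hA heq ⊢
      · omega
      · have := i.isLt; have := w.isLt; split_ifs at heq ⊢ <;> try omega
      · have := j'.isLt; have := v.isLt; split_ifs at heq ⊢ <;> try omega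
      · have h1 : ¬ v.val = j.val := by
          have := hx.2; simp only [Set.mem_singleton_iff, Sum.inr.injEq] at this
          exact fun h => this (Fin.ext h)
        have h2 : ¬ w.val = j.val := by
          have := hy.2; simp only [Set.mem_singleton_iff, Sum.inr.injEq] at this
          exact fun h => this (Fin.ext h)
        have := v.isLt; have := w.isLt; have := j.isLt
        split_ifs at heq ⊢ <;> try omega

end C

namespace C

variable {k n : ℕ}

set_option maxHeartbeats 4000000 in
theorem thm4 (hk : 3 ≤ k) (hodd : n % 2 = 1) (hn : 3 ≤ n) :
    ∀ a b : W k n, Arc k n a b →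
      DicolorableOn (fun x y => Arc k n x y ∧ ¬(x = a ∧ y = b)) Set.univ (k - 1) := by
  have hK : 0 < k - 1 := by omega
  rintro (i0 | v0) (j0 | w0) hab
  · -- hub-hub arc removed
    simp only [arc_ll] at hab
    by_cases h1 : 2 ≤ i0.val
    · by_cases h2 : 2 ≤ j0.val
      · -- two universal hubs
        apply dicolorable_of_rank hK
          (Sum.elim (fun l => if l.val = j0.val then i0.val else l.val)
            (fun v => if v.val = n - 1 then j0.val else v.val % 2))
          (Sum.elim (fun l => if l.val = j0.val then 5 else if l.val = i0.val then 4 else 1)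
            (fun v => if v.val % 2 = 1 then 2 else 0))
        · rintro (i | v) -
          · have := i.isLt; have := i0.isLt; simp; split_ifs <;> omega
          · have := j0.isLt; simp; split_ifs <;> omega
        · rintro (i | v) (j | w) - - ⟨hArc, hne⟩ heq <;>
            simp only [Sum.elim_inl, Sum.elim_inr, arc_ll, arc_lr, arc_rl, arc_rr] at hArc heq ⊢
          · have hne' : ¬(i.val = i0.val ∧ j.val = j0.val) := fun h =>
              hne ⟨congrArg Sum.inl (Fin.ext h.1), congrArg Sum.inl (Fin.ext h.2)⟩
            split_ifs at heq ⊢ <;> omega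
          · have := i.isLt; have := w.isLt; split_ifs at heq ⊢ <;> omega
          · have := j.isLt; have := v.isLt; split_ifs at heq ⊢ <;> omega
          · have := v.isLt; have := w.isLt; split_ifs at heq ⊢ <;> omega
      · -- i0 universal, j0 in {p,q}
        apply dicolorable_of_rank hK
          (Sum.elim (fun l => if l.val = j0.val then i0.val else l.val)
            (fun v => if v.val = 0 then j0.val else (v.val + 1 + j0.val) % 2))
          (Sum.elim (fun l => if l.val = j0.val then 5 else if l.val = i0.val then 4 else 2)
            (fun v => if v.val = 0 then 1 else if v.val % 2 = 0 then 1 else 0))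
        · rintro (i | v) -
          · have := i.isLt; have := i0.isLt; simp; split_ifs <;> omega
          · have := j0.isLt; simp; split_ifs <;> omega
        · rintro (i | v) (j | w) - - ⟨hArc, hne⟩ heq <;>
            simp only [Sum.elim_inl, Sum.elim_inr, arc_ll, arc_lr, arc_rl, arc_rr] at hArc heq ⊢
          · have hne' : ¬(i.val = i0.val ∧ j.val = j0.val) := fun h =>
              hne ⟨congrArg Sum.inl (Fin.ext h.1), congrArg Sum.inl (Fin.ext h.2)⟩
            have := i.isLt; have := j.isLt; split_ifs at heq ⊢ <;> omega
          · have := i.isLt; have := w.isLt; split_ifs at heq ⊢ <;> omega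
          · have := j.isLt; have := v.isLt; split_ifs at heq ⊢ <;> omega
          · have := v.isLt; have := w.isLt; split_ifs at heq ⊢ <;> omega
    · by_cases h2 : 2 ≤ j0.val
      · -- i0 in {p,q}, j0 universal
        apply dicolorable_of_rank hK
          (Sum.elim (fun l => if l.val = i0.val then j0.val else l.val)
            (fun v => if v.val = 0 then i0.val else (v.val + 1 + i0.val) % 2))
          (Sum.elim (fun l => if l.val = j0.val then 5 else if l.val = i0.val then 4 else 2)
            (fun v => if v.val = 0 then 1 else if v.val % 2 = 0 then 1 else 0))
        · rintro (i | v) -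
          · have := i.isLt; have := j0.isLt; simp; split_ifs <;> omega
          · have := i0.isLt; simp; split_ifs <;> omega
        · rintro (i | v) (j | w) - - ⟨hArc, hne⟩ heq <;>
            simp only [Sum.elim_inl, Sum.elim_inr, arc_ll, arc_lr, arc_rl, arc_rr] at hArc heq ⊢
          · have hne' : ¬(i.val = i0.val ∧ j.val = j0.val) := fun h =>
              hne ⟨congrArg Sum.inl (Fin.ext h.1), congrArg Sum.inl (Fin.ext h.2)⟩
            have := i.isLt; have := j.isLt; split_ifs at heq ⊢ <;> omega
          · have := i.isLt; have := w.isLt; split_ifs at heq ⊢ <;> omega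
          · have := j.isLt; have := v.isLt; split_ifs at heq ⊢ <;> omega
          · have := v.isLt; have := w.isLt; split_ifs at heq ⊢ <;> omega
      · -- p-q arc removed
        apply dicolorable_of_rank hK
          (Sum.elim (fun l => if l.val < 2 then 0 else l.val)
            (fun v => if v.val = 0 then 0 else 1))
          (Sum.elim (fun l => if l.val = j0.val then 5 else if l.val = i0.val then 4 else 1)
            (fun v => if v.val = 0 then 0 else if v.val % 2 = 0 then 1 else 0))
        · rintro (i | v) -
          · have := i.isLt; simp; split_ifs <;> omega
          · simp; split_ifs <;> omega
        · rintro (i | v) (j | w) - - ⟨hArc, hne⟩ heq <;>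
            simp only [Sum.elim_inl, Sum.elim_inr, arc_ll, arc_lr, arc_rl, arc_rr] at hArc heq ⊢
          · have hne' : ¬(i.val = i0.val ∧ j.val = j0.val) := fun h =>
              hne ⟨congrArg Sum.inl (Fin.ext h.1), congrArg Sum.inl (Fin.ext h.2)⟩
            split_ifs at heq ⊢ <;> omega
          · have := i.isLt; have := w.isLt; split_ifs at heq ⊢ <;> omega
          · have := j.isLt; have := v.isLt; split_ifs at heq ⊢ <;> omega
          · have := v.isLt; have := w.isLt; split_ifs at heq ⊢ <;> omega
  · -- hub-to-cycle arc removed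
    simp only [arc_lr] at hab
    by_cases h1 : 2 ≤ i0.val
    · -- universal hub to cycle vertex
      apply dicolorable_of_rank hK
        (Sum.elim (fun l => l.val)
          (fun v => if v.val = w0.val then i0.val
            else if v.val < w0.val then v.val % 2 else (v.val + 1) % 2))
        (Sum.elim (fun l => if l.val = i0.val then 4 else 1)
          (fun v => if v.val = w0.val then 5 else if v.val % 2 = 1 then 2 else 0))
      · rintro (i | v) -
        · have := i.isLt; simp <;> omega
        · have := i0.isLt; simp; split_ifs <;> omega
      · rintro (i | v) (j | w) - - ⟨hArc, hne⟩ heq <;>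
          simp only [Sum.elim_inl, Sum.elim_inr, arc_ll, arc_lr, arc_rl, arc_rr] at hArc heq ⊢
        · omega
        · have hne' : ¬(i.val = i0.val ∧ w.val = w0.val) := fun h =>
            hne ⟨congrArg Sum.inl (Fin.ext h.1), congrArg Sum.inr (Fin.ext h.2)⟩
          have := i.isLt; have := w.isLt; have := w0.isLt; split_ifs at heq ⊢ <;> omega
        · have := j.isLt; have := v.isLt; have := w0.isLt; split_ifs at heq ⊢ <;> omega
        · have := v.isLt; have := w.isLt; have := w0.isLt; have := i0.isLt
          split_ifs at heq ⊢ <;> omega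
    · -- p or q to a source; hab gives w0 even
      have hw0 : w0.val % 2 = 0 := hab.resolve_left h1
      by_cases hlast : w0.val = n - 1
      · -- w0 = n-1 : use downward coloring around j = n-2
        apply dicolorable_of_rank hK
          (Sum.elim (fun l => l.val)
            (fun v => ((if v.val ≤ n - 2 then (n - 2 - v.val) % 2
              else (n - 2 + n - v.val) % 2) + i0.val) % 2))
          (Sum.elim (fun _ => 1)
            (fun v => if v.val = w0.val then 3 else if v.val % 2 = 1 then 2 else 0))
        · rintro (i | v) -
          · have := i.isLt; simp <;> omega
          · simp; split_ifs <;> omega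
        · rintro (i | v) (j | w) - - ⟨hArc, hne⟩ heq <;>
            simp only [Sum.elim_inl, Sum.elim_inr, arc_ll, arc_lr, arc_rl, arc_rr] at hArc heq ⊢
          · omega
          · have hne' : ¬(i.val = i0.val ∧ w.val = w0.val) := fun h =>
              hne ⟨congrArg Sum.inl (Fin.ext h.1), congrArg Sum.inr (Fin.ext h.2)⟩
            have := i.isLt; have := w.isLt; split_ifs at heq ⊢ <;> omega
          · have := j.isLt; have := v.isLt; split_ifs at heq ⊢ <;> omega
          · have := v.isLt; have := w.isLt; split_ifs at heq ⊢ <;> omega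
      · -- w0 ≠ n-1 : upward coloring around j = w0+1
        apply dicolorable_of_rank hK
          (Sum.elim (fun l => l.val)
            (fun v => ((if w0.val + 1 ≤ v.val then (v.val - (w0.val + 1)) % 2
              else (v.val + n - (w0.val + 1)) % 2) + i0.val) % 2))
          (Sum.elim (fun _ => 1)
            (fun v => if v.val = w0.val then 3 else if v.val % 2 = 1 then 2 else 0))
        · rintro (i | v) -
          · have := i.isLt; simp <;> omega
          · simp; split_ifs <;> omega
        · rintro (i | v) (j | w) - - ⟨hArc, hne⟩ heq <;>
            simp only [Sum.elim_inl, Sum.elim_inr, arc_ll, arc_lr, arc_rl, arc_rr] at hArc heq ⊢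
          · omega
          · have hne' : ¬(i.val = i0.val ∧ w.val = w0.val) := fun h =>
              hne ⟨congrArg Sum.inl (Fin.ext h.1), congrArg Sum.inr (Fin.ext h.2)⟩
            have := i.isLt; have := w.isLt; have := w0.isLt; split_ifs at heq ⊢ <;> omega
          · have := j.isLt; have := v.isLt; have := w0.isLt; split_ifs at heq ⊢ <;> omega
          · have := v.isLt; have := w.isLt; have := w0.isLt; split_ifs at heq ⊢ <;> omega
  · -- cycle-to-hub arc removed
    simp only [arc_rl] at hab
    by_cases h1 : 2 ≤ j0.val
    · -- cycle vertex to universal hub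
      apply dicolorable_of_rank hK
        (Sum.elim (fun l => l.val)
          (fun v => if v.val = v0.val then j0.val
            else if v.val < v0.val then v.val % 2 else (v.val + 1) % 2))
        (Sum.elim (fun l => if l.val = j0.val then 5 else 1)
          (fun v => if v.val = v0.val then 4 else if v.val % 2 = 1 then 2 else 0))
      · rintro (i | v) -
        · have := i.isLt; simp <;> omega
        · have := j0.isLt; simp; split_ifs <;> omega
      · rintro (i | v) (j | w) - - ⟨hArc, hne⟩ heq <;>
          simp only [Sum.elim_inl, Sum.elim_inr, arc_ll, arc_lr, arc_rl, arc_rr] at hArc heq ⊢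
        · omega
        · have := i.isLt; have := w.isLt; have := v0.isLt; split_ifs at heq ⊢ <;> omega
        · have hne' : ¬(v.val = v0.val ∧ j.val = j0.val) := fun h =>
            hne ⟨congrArg Sum.inr (Fin.ext h.1), congrArg Sum.inl (Fin.ext h.2)⟩
          have := j.isLt; have := v.isLt; have := v0.isLt; split_ifs at heq ⊢ <;> omega
        · have := v.isLt; have := w.isLt; have := v0.isLt; have := j0.isLt
          split_ifs at heq ⊢ <;> omega
    · -- sink v0 to p or q; hab gives v0 odd
      have hv0 : v0.val % 2 = 1 := hab.resolve_left h1
      apply dicolorable_of_rank hK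
        (Sum.elim (fun l => l.val)
          (fun v => ((if v.val ≤ v0.val then (v0.val - v.val) % 2
            else (v0.val + n - v.val) % 2) + j0.val) % 2))
        (Sum.elim (fun _ => 4)
          (fun v => if v.val = v0.val then 2 else if v.val = v0.val + 1 then 3
            else if v.val % 2 = 1 then 5 else 0))
      · rintro (i | v) -
        · have := i.isLt; simp <;> omega
        · simp; split_ifs <;> omega
      · rintro (i | v) (j | w) - - ⟨hArc, hne⟩ heq <;>
          simp only [Sum.elim_inl, Sum.elim_inr, arc_ll, arc_lr, arc_rl, arc_rr] at hArc heq ⊢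
        · omega
        · have := i.isLt; have := w.isLt; have := v0.isLt; split_ifs at heq ⊢ <;> omega
        · have hne' : ¬(v.val = v0.val ∧ j.val = j0.val) := fun h =>
            hne ⟨congrArg Sum.inr (Fin.ext h.1), congrArg Sum.inl (Fin.ext h.2)⟩
          have := j.isLt; have := v.isLt; have := v0.isLt; split_ifs at heq ⊢ <;> omega
        · have := v.isLt; have := w.isLt; have := v0.isLt; split_ifs at heq ⊢ <;> omega
  · -- cycle-cycle arc removed
    simp only [arc_rr] at hab
    rcases hab with ⟨hev, hadj⟩ | ⟨hz, hlast⟩ | ⟨hlast, hz⟩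
    · rcases hadj with hup | hdown
      · -- w0 = v0 + 1 : upward coloring around j = w0
        apply dicolorable_of_rank hK
          (Sum.elim (fun l => l.val)
            (fun v => if w0.val ≤ v.val then (v.val - w0.val) % 2
              else (v.val + n - w0.val) % 2))
          (Sum.elim (fun _ => 2) (fun v => if v.val % 2 = 1 then 3 else 1))
        · rintro (i | v) -
          · have := i.isLt; simp <;> omega
          · simp; split_ifs <;> omega
        · rintro (i | v) (j | w) - - ⟨hArc, hne⟩ heq <;>
            simp only [Sum.elim_inl, Sum.elim_inr, arc_ll, arc_lr, arc_rl, arc_rr] at hArc heq ⊢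
          · omega
          · have := i.isLt; have := w.isLt; have := w0.isLt; split_ifs at heq ⊢ <;> omega
          · have := j.isLt; have := v.isLt; have := w0.isLt; split_ifs at heq ⊢ <;> omega
          · have hne' : ¬(v.val = v0.val ∧ w.val = w0.val) := fun h =>
              hne ⟨congrArg Sum.inr (Fin.ext h.1), congrArg Sum.inr (Fin.ext h.2)⟩
            have := v.isLt; have := w.isLt; have := w0.isLt; have := v0.isLt
            split_ifs at heq ⊢ <;> omega
      · -- v0 = w0 + 1 : downward coloring around j = w0
        apply dicolorable_of_rank hK
          (Sum.elim (fun l => l.val)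
            (fun v => if v.val ≤ w0.val then (w0.val - v.val) % 2
              else (w0.val + n - v.val) % 2))
          (Sum.elim (fun _ => 2) (fun v => if v.val % 2 = 1 then 3 else 1))
        · rintro (i | v) -
          · have := i.isLt; simp <;> omega
          · simp; split_ifs <;> omega
        · rintro (i | v) (j | w) - - ⟨hArc, hne⟩ heq <;>
            simp only [Sum.elim_inl, Sum.elim_inr, arc_ll, arc_lr, arc_rl, arc_rr] at hArc heq ⊢
          · omega
          · have := i.isLt; have := w.isLt; have := w0.isLt; split_ifs at heq ⊢ <;> omega
          · have := j.isLt; have := v.isLt; have := w0.isLt; split_ifs at heq ⊢ <;> omega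
          · have hne' : ¬(v.val = v0.val ∧ w.val = w0.val) := fun h =>
              hne ⟨congrArg Sum.inr (Fin.ext h.1), congrArg Sum.inr (Fin.ext h.2)⟩
            have := v.isLt; have := w.isLt; have := w0.isLt; have := v0.isLt
            split_ifs at heq ⊢ <;> omega
    all_goals {
      -- digon arc removed (either direction)
      apply dicolorable_of_rank hK
        (Sum.elim (fun l => l.val) (fun v => v.val % 2))
        (Sum.elim (fun l => if l.val = 0 then 3 else 0)
          (fun v => if v.val % 2 = 1 then 1 else if v.val = w0.val then 2
            else if v.val = v0.val then 1 else 0))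
      · rintro (i | v) -
        · have := i.isLt; simp <;> omega
        · simp; omega
      · rintro (i | v) (j | w) - - ⟨hArc, hne⟩ heq <;>
          simp only [Sum.elim_inl, Sum.elim_inr, arc_ll, arc_lr, arc_rl, arc_rr] at hArc heq ⊢
        · omega
        · have := i.isLt; have := w.isLt; split_ifs at heq ⊢ <;> omega
        · have := j.isLt; have := v.isLt; split_ifs at heq ⊢ <;> omega
        · have hne' : ¬(v.val = v0.val ∧ w.val = w0.val) := fun h =>
            hne ⟨congrArg Sum.inr (Fin.ext h.1), congrArg Sum.inr (Fin.ext h.2)⟩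
          have := v.isLt; have := w.isLt; have := w0.isLt; have := v0.isLt
          split_ifs at heq ⊢ <;> omega }

end C

namespace C

variable {k n : ℕ}

lemma filterMap_getLeft_length : ∀ l : List (W k n),
    (l.filterMap (fun x : W k n => x.getLeft?)).length = l.countP (fun x => x.isLeft) := by
  intro l
  induction l with
  | nil => simp
  | cons a t ih => rcases a with i | v <;> simp [List.countP_cons, ih, List.filterMap_cons]

lemma hub_count_le (l : List (W k n)) (hnd : l.Nodup) :
    l.countP (fun x => x.isLeft) ≤ k - 1 := by
  have hnd2 : (l.filterMap (fun x : W k n => x.getLeft?)).Nodup := by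
    apply List.Nodup.filterMap ?_ hnd
    rintro (i | v) (j | w) b h1 h2 <;> simp_all
  have := hnd2.length_le_card
  simpa [filterMap_getLeft_length] using this

lemma odd_no_out (hodd : n % 2 = 1) (hn : 3 ≤ n) {v w : Fin n}
    (h : Arc k n (.inr v) (.inr w)) (ho : v.val % 2 = 1) : False := by
  have := v.isLt; simp only [arc_rr] at h; omega

lemma three_run (hodd : n % 2 = 1) (hn : 3 ≤ n) {a b c : Fin n} (hac : a.val ≠ c.val)
    (h1 : Arc k n (.inr a) (.inr b)) (h2 : Arc k n (.inr b) (.inr c)) :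
    ((a.val = 0 ∧ b.val = n - 1) ∨ (a.val = n - 1 ∧ b.val = 0)) ∧ c.val % 2 = 1 := by
  have := a.isLt; have := b.isLt; have := c.isLt
  simp only [arc_rr] at h1 h2; omega

def Dg (z0 z1 : W k n) (l : List (W k n)) : ℕ :=
  if 0 < l.countP (fun x => x = z0) ∧ 0 < l.countP (fun x => x = z1) then 1 else 0

lemma Dg_le (z0 z1 : W k n) (l : List (W k n)) : Dg z0 z1 l ≤ 1 := by
  unfold Dg; split_ifs <;> omega

lemma cp_mem (z : W k n) (l : List (W k n)) :
    0 < l.countP (fun x => x = z) ↔ z ∈ l := by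
  rw [List.countP_pos_iff]
  constructor
  · rintro ⟨a, ha, he⟩; simp at he; rwa [he] at ha
  · intro h; exact ⟨z, h, by simp⟩

lemma Dg_eq_one {z0 z1 : W k n} {l : List (W k n)} (h0 : z0 ∈ l) (h1 : z1 ∈ l) :
    Dg z0 z1 l = 1 := by
  unfold Dg; rw [if_pos ⟨(cp_mem z0 l).mpr h0, (cp_mem z1 l).mpr h1⟩]

lemma Dg_eq_zero {z0 z1 : W k n} {l : List (W k n)} (h : z0 ∉ l ∨ z1 ∉ l) :
    Dg z0 z1 l = 0 := by
  unfold Dg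
  rw [if_neg]
  rintro ⟨h0, h1⟩
  rw [cp_mem] at h0 h1
  tauto

lemma Dg_mono (z0 z1 x : W k n) (l : List (W k n)) :
    Dg z0 z1 l ≤ Dg z0 z1 (x :: l) := by
  unfold Dg
  split_ifs with hA hB
  · omega
  · exfalso; apply hB
    rcases hA with ⟨h1, h2⟩
    rw [cp_mem] at h1 h2 ⊢
    rw [cp_mem]
    exact ⟨List.mem_cons_of_mem x h1, List.mem_cons_of_mem x h2⟩
  · omega
  · omega

theorem thm5 (hk : 3 ≤ k) (hodd : n % 2 = 1) (hn : 3 ≤ n) :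
    ¬ ∃ l : List (W k n), l.Nodup ∧ l.Chain' (Arc k n) ∧ l.length = 3 * k + 1 := by
  set z0 : W k n := Sum.inr ⟨0, by omega⟩ with hz0def
  set z1 : W k n := Sum.inr ⟨n - 1, by omega⟩ with hz1def
  have key : ∀ m (l : List (W k n)), l.length ≤ m → l.Nodup → l.Chain' (Arc k n) →
      l.length ≤ 3 * (l.countP (fun x => x.isLeft)) + 2 + Dg z0 z1 l := by
    intro m
    induction m with
    | zero =>
      intro l hl _ _
      have : l = [] := List.eq_nil_of_length_eq_zero (by omega)
      subst this; simp
    | succ m ih =>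
      rintro (_ | ⟨(i | a), t⟩) hl hnd hch
      · simp
      · -- starts with a hub
        have ht := ih t (by simpa using hl) (List.nodup_cons.mp hnd).2 hch.tail
        have h1 := Dg_le z0 z1 t
        simp only [List.length_cons, List.countP_cons, Sum.isLeft_inl, Sum.isLeft_inr,
          reduceIte] at *
        omega
      · rcases t with _ | ⟨(i | b), t2⟩
        · simp only [List.length_singleton]; omega
        · -- cycle vertex then hub
          have ht := ih t2 (by simp at hl ⊢; omega)
            ((List.nodup_cons.mp (List.nodup_cons.mp hnd).2).2)
            ((List.isChain_cons_cons.mp hch).2.tail)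
          have h1 := Dg_le z0 z1 t2
          simp only [List.length_cons, List.countP_cons, Sum.isLeft_inl, Sum.isLeft_inr,
            reduceIte] at *
          omega
        · rcases t2 with _ | ⟨(i | c), t3⟩
          · simp only [List.length_cons, List.length_singleton, List.length_nil]; omega
          · -- a, b cycle then hub
            have ht := ih t3 (by simp at hl ⊢; omega)
              (((List.nodup_cons.mp (List.nodup_cons.mp (List.nodup_cons.mp hnd).2).2)).2)
              (((List.isChain_cons_cons.mp (List.isChain_cons_cons.mp hch).2).2).tail)
            have hDl : Dg z0 z1 t3 ≤ Dg z0 z1 (Sum.inr a :: Sum.inr b :: Sum.inl i :: t3) :=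
              le_trans (Dg_mono z0 z1 (Sum.inl i) t3)
                (le_trans (Dg_mono z0 z1 _ _) (Dg_mono z0 z1 _ _))
            simp only [List.length_cons, List.countP_cons, Sum.isLeft_inl, Sum.isLeft_inr,
              reduceIte] at *
            omega
          · -- three cycle vertices a, b, c
            have harc1 : Arc k n (.inr a) (.inr b) := (List.isChain_cons_cons.mp hch).1
            have harc2 : Arc k n (.inr b) (.inr c) :=
              (List.isChain_cons_cons.mp (List.isChain_cons_cons.mp hch).2).1
            have hac : a.val ≠ c.val := by
              have h := (List.nodup_cons.mp hnd).1
              simp only [List.mem_cons, not_or] at h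
              intro he
              exact h.2.1 (congrArg Sum.inr (Fin.ext he))
            obtain ⟨hdig, hcodd⟩ := three_run hodd hn hac harc1 harc2
            have hz0mem : z0 = Sum.inr a ∨ z0 = Sum.inr b := by
              rcases hdig with ⟨ha, hb⟩ | ⟨ha, hb⟩
              · left; rw [hz0def]; exact congrArg Sum.inr (Fin.ext ha.symm)
              · right; rw [hz0def]; exact congrArg Sum.inr (Fin.ext hb.symm)
            have hz1mem : z1 = Sum.inr a ∨ z1 = Sum.inr b := by
              rcases hdig with ⟨ha, hb⟩ | ⟨ha, hb⟩
              · right; rw [hz1def]; exact congrArg Sum.inr (Fin.ext hb.symm)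
              · left; rw [hz1def]; exact congrArg Sum.inr (Fin.ext ha.symm)
            rcases t3 with _ | ⟨(i | d), t4⟩
            · -- exactly three vertices
              have hD1 : Dg z0 z1 [Sum.inr a, Sum.inr b, Sum.inr c] = 1 := by
                apply Dg_eq_one
                · rcases hz0mem with h | h <;> rw [h] <;> simp
                · rcases hz1mem with h | h <;> rw [h] <;> simp
              rw [hD1]
              simp only [List.length_cons, List.length_nil]
              omega
            · -- three cycle vertices then a hub
              have hnd' := hnd
              simp only [List.nodup_cons, List.mem_cons, not_or] at hnd'
              have ht := ih t4 (by simp at hl ⊢; omega) hnd'.2.2.2.2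
                ((((List.isChain_cons_cons.mp (List.isChain_cons_cons.mp (List.isChain_cons_cons.mp hch).2).2)).2).tail)
              have hDt4 : Dg z0 z1 t4 = 0 := by
                apply Dg_eq_zero
                rcases hz0mem with h | h <;> rw [h]
                · left; exact hnd'.1.2.2.2
                · left; exact hnd'.2.1.2.2
              have hDl : Dg z0 z1 (Sum.inr a :: Sum.inr b :: Sum.inr c :: Sum.inl i :: t4) = 1 := by
                apply Dg_eq_one
                · rcases hz0mem with h | h <;> rw [h] <;> simp
                · rcases hz1mem with h | h <;> rw [h] <;> simp
              rw [hDl]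
              rw [hDt4] at ht
              simp only [List.length_cons, List.countP_cons, Sum.isLeft_inl, Sum.isLeft_inr,
                reduceIte] at *
              omega
            · -- four cycle vertices: impossible
              exact absurd ((List.isChain_cons_cons.mp
                (List.isChain_cons_cons.mp (List.isChain_cons_cons.mp hch).2).2).1)
                (fun h => odd_no_out hodd hn h hcodd)
  rintro ⟨l, hnd, hch, hlen⟩
  have hb := key l.length l le_rfl hnd hch
  have hc := hub_count_le l hnd
  have hd := Dg_le z0 z1 l
  omega

end C

namespace C

lemma dicolorable_pullback {α β : Type} (e : β ≃ α) (A : α → α → Prop) (s : Set α) (K : ℕ)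
    (h : DicolorableOn A s K) : DicolorableOn (fun x y => A (e x) (e y)) (e ⁻¹' s) K := by
  obtain ⟨φ, hφ⟩ := h
  refine ⟨fun x => φ (e x), ?_⟩
  rintro v l ⟨hm, hnd, hch⟩ hmono
  apply hφ (e v) (l.map e)
  · refine ⟨?_, ?_, ?_⟩
    · intro x hx
      rcases List.mem_cons.mp hx with h | h
      · subst h; exact hm v (by simp)
      · obtain ⟨y, hy, rfl⟩ := List.mem_map.mp h
        exact hm y (List.mem_cons_of_mem _ hy)
    · rw [← List.map_cons]
      exact hnd.map e.injective
    · have := (List.isChain_map (R := A) e).mpr hch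
      rwa [List.map_cons, List.map_append, List.map_singleton] at this
  · intro x hx
    rcases List.mem_cons.mp hx with h | h
    · subst h; rfl
    · obtain ⟨y, hy, rfl⟩ := List.mem_map.mp h
      exact hmono y (List.mem_cons_of_mem _ hy)

end C

/-- For every `k ≥ 3` there are infinitely many `k`-dicritical digraphs containing
no directed path on `3k+1` vertices. -/
theorem stmt3 (k : ℕ) (hk : 3 ≤ k) :
    ∀ N : ℕ, ∃ n : ℕ, N < n ∧ ∃ A : Fin n → Fin n → Prop,
      (∀ v, ¬ A v v) ∧ Dicritical A Set.univ k ∧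
      ¬ ∃ l : List (Fin n), l.Nodup ∧ l.Chain' A ∧ l.length = 3 * k + 1 := by
  intro N
  set m : ℕ := 2 * N + 3 with hm
  have hodd : m % 2 = 1 := by omega
  have hm3 : 3 ≤ m := by omega
  refine ⟨(k - 1) + m, by omega, ?_⟩
  set e : C.W k m ≃ Fin ((k - 1) + m) := finSumFinEquiv with he
  refine ⟨fun x y => C.Arc k m (e.symm x) (e.symm y), ?_, ⟨?_, ?_, ?_, ?_⟩, ?_⟩
  · intro v
    exact C.arc_irrefl hm3 (e.symm v)
  · -- not (k-1)-dicolorable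
    intro h
    apply C.thm1 hk hodd hm3 (k := k)
    have h2 := C.dicolorable_pullback e _ _ _ h
    have hAeq : (fun x y => C.Arc k m (e.symm (e x)) (e.symm (e y))) = C.Arc k m := by
      funext x y
      rw [Equiv.symm_apply_apply, Equiv.symm_apply_apply]
    rwa [hAeq, Set.preimage_univ] at h2
  · -- k-dicolorable
    have h2 := C.dicolorable_pullback e.symm (C.Arc k m) Set.univ k (C.thm2 hk hodd hm3)
    rwa [Set.preimage_univ] at h2
  · -- vertex deletion
    intro v _
    have h3 := C.thm3 hk hodd hm3 (e.symm v)
    have h2 := C.dicolorable_pullback e.symm _ _ _ h3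
    have hset : e.symm ⁻¹' (Set.univ \ {e.symm v}) = Set.univ \ {v} := by
      ext x
      simp only [Set.mem_preimage, Set.mem_diff, Set.mem_univ, Set.mem_singleton_iff,
        true_and]
      exact ⟨fun h hx => h (by rw [hx]), fun h hx => h (e.symm.injective hx)⟩
    rwa [hset] at h2
  · -- arc deletion
    intro a b _ _ hab
    have h4 := C.thm4 hk hodd hm3 (e.symm a) (e.symm b) hab
    have h2 := C.dicolorable_pullback e.symm _ _ _ h4
    have hAeq : (fun x y => C.Arc k m (e.symm x) (e.symm y)
        ∧ ¬(e.symm x = e.symm a ∧ e.symm y = e.symm b))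
        = fun x y => (C.Arc k m (e.symm x) (e.symm y)) ∧ ¬(x = a ∧ y = b) := by
      funext x y
      apply propext
      constructor
      · rintro ⟨h1, h2⟩
        exact ⟨h1, fun hc => h2 ⟨by rw [hc.1], by rw [hc.2]⟩⟩
      · rintro ⟨h1, h2⟩
        exact ⟨h1, fun hc => h2 ⟨e.symm.injective hc.1, e.symm.injective hc.2⟩⟩
    rwa [hAeq, Set.preimage_univ] at h2
  · -- no long directed path
    rintro ⟨l, hnd, hch, hlen⟩
    apply C.thm5 hk hodd hm3 (n := m)
    refine ⟨l.map e.symm, hnd.map e.symm.injective, ?_, by simpa using hlen⟩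
    exact (List.isChain_map e.symm).mpr hch
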